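/- Let J be a closed ideal in C(Δ, L₁), where Δ is the Cantor set. For each ω ∈ Δ the set J_ω = {g ∈ L₁ : for all ε > 0 there exists f ∈ J with ‖g − f(ω)‖₁ < ε} is a closed ideal of L₁, and J = {f ∈ C(Δ, L₁) : f(ω) ∈ J_ω for all ω ∈ Δ}. -/

import Mathlib

open MeasureTheory

namespace IdealsCDL1

/-- The Cantor set. -/
abbrev Δ : Type := ℕ → Bool

/-- `L₁ = L₁[0,1]`. -/
noncomputable abbrev L1 : Type := Lp ℝ 1 (volume.restrict (Set.Icc (0:ℝ) 1))

/-- A subset of a Banach lattice is a (not necessarily closed) ideal if it is a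
linear subspace which is solid: `|h| ≤ |g|` and `g ∈ J` imply `h ∈ J`. -/
def IsIdeal {E : Type} [NormedAddCommGroup E] [Lattice E] [NormedSpace ℝ E]
    (J : Set E) : Prop :=
  (0 ∈ J) ∧ (∀ f ∈ J, ∀ g ∈ J, f + g ∈ J) ∧ (∀ (c : ℝ), ∀ f ∈ J, c • f ∈ J) ∧
    (∀ g ∈ J, ∀ h, |h| ≤ |g| → h ∈ J)

/-- The fiberwise approximation ideal `J_ω ⊆ L₁` of an ideal
`J ⊆ C(Δ, L₁)`. -/
def fiberIdeal (J : Set C(Δ, L1)) (ω : Δ) : Set L1 :=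
  {g : L1 | ∀ ε > (0:ℝ), ∃ f ∈ J, ‖g - f ω‖ < ε}

/-! ### Auxiliary lemmas -/

/-- Truncation estimate in a normed lattice group. -/
lemma trunc_est {E : Type} [NormedAddCommGroup E] [Lattice E] [HasSolidNorm E] [IsOrderedAddMonoid E] {g h u : E}
    (hh : |h| ≤ |g|) : |h - ((h ⊓ u) ⊔ (-u))| ≤ |(|g| - u)| := by
  set T := (h ⊓ u) ⊔ (-u) with hT
  have h1 : h - T ≤ (|g| - u) ⊔ 0 := by
    calc h - T ≤ h - (h ⊓ u) := sub_le_sub_left le_sup_left _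
    _ = (h - h) ⊔ (h - u) := sub_inf _ _ _
    _ = 0 ⊔ (h - u) := by rw [sub_self]
    _ ≤ 0 ⊔ (|g| - u) :=
        sup_le_sup_left (sub_le_sub_right ((le_abs_self h).trans hh) u) 0
    _ = (|g| - u) ⊔ 0 := sup_comm _ _
  have h2 : T - h ≤ (|g| - u) ⊔ 0 := by
    have hneg : -u - h ≤ |g| - u := by
      have : -h ≤ |g| := (neg_le_abs h).trans hh
      calc -u - h = -h - u := by abel
      _ ≤ |g| - u := sub_le_sub_right this u
    calc T - h ≤ (h ⊔ (-u)) - h := sub_le_sub_right (sup_le_sup_right inf_le_left _) h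
    _ = (h - h) ⊔ (-u - h) := sup_sub _ _ _
    _ = 0 ⊔ (-u - h) := by rw [sub_self]
    _ ≤ 0 ⊔ (|g| - u) := sup_le_sup_left hneg 0
    _ = (|g| - u) ⊔ 0 := sup_comm _ _
  have habs : |h - T| ≤ (|g| - u) ⊔ 0 := by
    rw [abs_le']
    exact ⟨h1, by rwa [neg_sub]⟩
  exact habs.trans (sup_le (le_abs_self _) (abs_nonneg _))

open Classical in
/-- Glue two continuous maps along a clopen set. -/
noncomputable def glue (D : Set Δ) (hD : IsClopen D) (a b : C(Δ, L1)) : C(Δ, L1) :=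
  ⟨fun t => if t ∈ D then a t else b t, by
    apply Continuous.if
    · intro x hx
      rw [Set.setOf_mem_eq, hD.frontier_eq] at hx
      exact absurd hx (Set.notMem_empty x)
    · exact a.continuous
    · exact b.continuous⟩

lemma glue_apply_mem {D : Set Δ} (hD : IsClopen D) (a b : C(Δ, L1)) {t : Δ}
    (ht : t ∈ D) : glue D hD a b t = a t := by
  simp only [glue, ContinuousMap.coe_mk]
  rw [if_pos ht]

lemma glue_apply_not_mem {D : Set Δ} (hD : IsClopen D) (a b : C(Δ, L1)) {t : Δ}
    (ht : t ∉ D) : glue D hD a b t = b t := by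
  simp only [glue, ContinuousMap.coe_mk]
  rw [if_neg ht]

lemma glue_mem {J : Set C(Δ, L1)} (hJ : IsIdeal J) {D : Set Δ} (hD : IsClopen D)
    {a b : C(Δ, L1)} (ha : a ∈ J) (hb : b ∈ J) : glue D hD a b ∈ J := by
  obtain ⟨h0, hadd, hsmul, hsolid⟩ := hJ
  have haJ : |a| ∈ J := hsolid a ha _ (le_of_eq (abs_abs a))
  have hbJ : |b| ∈ J := hsolid b hb _ (le_of_eq (abs_abs b))
  have hsum : |a| + |b| ∈ J := hadd _ haJ _ hbJ
  have hnn : (0 : C(Δ, L1)) ≤ |a| + |b| :=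
    add_nonneg (abs_nonneg a) (abs_nonneg b)
  refine hsolid _ hsum _ ?_
  rw [show |(|a| + |b|)| = |a| + |b| from abs_of_nonneg hnn, ContinuousMap.le_def]
  intro t
  show |glue D hD a b| t ≤ (|a| + |b|) t
  rw [ContinuousMap.abs_apply, ContinuousMap.add_apply, ContinuousMap.abs_apply,
    ContinuousMap.abs_apply]
  by_cases ht : t ∈ D
  · rw [glue_apply_mem hD a b ht]
    exact le_add_of_nonneg_right (abs_nonneg _)
  · rw [glue_apply_not_mem hD a b ht]
    exact le_add_of_nonneg_left (abs_nonneg _)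

/-- Patch together finitely many functions along clopen sets. -/
noncomputable def patch (C : Δ → Set Δ) (hC : ∀ ω, IsClopen (C ω))
    (g : Δ → C(Δ, L1)) : List Δ → C(Δ, L1)
  | [] => 0
  | ω :: l => glue (C ω) (hC ω) (g ω) (patch C hC g l)

lemma patch_mem {J : Set C(Δ, L1)} (hJ : IsIdeal J) (C : Δ → Set Δ)
    (hC : ∀ ω, IsClopen (C ω)) (g : Δ → C(Δ, L1)) :
    ∀ l : List Δ, (∀ ω ∈ l, g ω ∈ J) → patch C hC g l ∈ J := by
  intro l
  induction l with
  | nil => intro _; exact hJ.1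
  | cons ω l ih =>
      intro hl
      exact glue_mem hJ (hC ω) (hl ω List.mem_cons_self)
        (ih fun ω' hω' => hl ω' (List.mem_cons_of_mem _ hω'))

lemma patch_spec (C : Δ → Set Δ) (hC : ∀ ω, IsClopen (C ω))
    (g : Δ → C(Δ, L1)) (f : C(Δ, L1)) (δ : ℝ) :
    ∀ l : List Δ, (∀ ω ∈ l, ∀ t ∈ C ω, ‖f t - g ω t‖ < δ) →
      ∀ t : Δ, (∃ ω ∈ l, t ∈ C ω) → ‖f t - patch C hC g l t‖ < δ := by
  intro l
  induction l with
  | nil => rintro _ t ⟨ω, hω, _⟩; exact absurd hω List.not_mem_nil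
  | cons ω l ih =>
      rintro hl t ⟨ω', hω', htω'⟩
      by_cases ht : t ∈ C ω
      · rw [show patch C hC g (ω :: l) = glue (C ω) (hC ω) (g ω) (patch C hC g l) from rfl,
          glue_apply_mem (hC ω) _ _ ht]
        exact hl ω List.mem_cons_self t ht
      · rw [show patch C hC g (ω :: l) = glue (C ω) (hC ω) (g ω) (patch C hC g l) from rfl,
          glue_apply_not_mem (hC ω) _ _ ht]
        have hω'l : ω' ∈ l := by
          rcases List.mem_cons.mp hω' with rfl | h
          · exact absurd htω' ht
          · exact h
        exact ih (fun ω'' hω'' => hl ω'' (List.mem_cons_of_mem _ hω'')) t ⟨ω', hω'l, htω'⟩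

/-- For a closed ideal `J` of the Banach lattice `C(Δ, L₁)` of `L₁`-valued
continuous functions on the Cantor set, each fiber set
`J_ω = {g : ∀ ε > 0, ∃ f ∈ J, ‖g − f(ω)‖ < ε}` is a closed ideal of `L₁`, and
`J = {f : f(ω) ∈ J_ω for all ω}`. -/
theorem ideal_structure (J : Set C(Δ, L1)) (hJclosed : IsClosed J)
    (hJideal : IsIdeal J) :
    (∀ ω : Δ, IsClosed (fiberIdeal J ω) ∧ IsIdeal (fiberIdeal J ω)) ∧
    J = {f : C(Δ, L1) | ∀ ω : Δ, f ω ∈ fiberIdeal J ω} := by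
  obtain ⟨hJ0, hJadd, hJsmul, hJsolid⟩ := hJideal
  constructor
  · intro ω
    constructor
    · -- closedness: `fiberIdeal J ω` is the closure of the image of evaluation
      have : fiberIdeal J ω = closure ((fun f : C(Δ, L1) => f ω) '' J) := by
        ext g
        rw [Metric.mem_closure_iff]
        constructor
        · intro hg ε hε
          obtain ⟨f, hfJ, hf⟩ := hg ε hε
          exact ⟨f ω, ⟨f, hfJ, rfl⟩, by rwa [dist_eq_norm]⟩
        · rintro hg ε hε
          obtain ⟨_, ⟨f, hfJ, rfl⟩, hd⟩ := hg ε hε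
          exact ⟨f, hfJ, by rwa [dist_eq_norm] at hd⟩
      rw [this]; exact isClosed_closure
    · refine ⟨?_, ?_, ?_, ?_⟩
      · -- zero
        intro ε hε
        exact ⟨0, hJ0, by simpa using hε⟩
      · -- addition
        intro g₁ hg₁ g₂ hg₂ ε hε
        obtain ⟨f₁, hf₁J, hf₁⟩ := hg₁ (ε / 2) (by positivity)
        obtain ⟨f₂, hf₂J, hf₂⟩ := hg₂ (ε / 2) (by positivity)
        refine ⟨f₁ + f₂, hJadd _ hf₁J _ hf₂J, ?_⟩
        rw [ContinuousMap.add_apply]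
        have key : g₁ + g₂ - (f₁ ω + f₂ ω) = (g₁ - f₁ ω) + (g₂ - f₂ ω) := by abel
        rw [key]
        calc ‖(g₁ - f₁ ω) + (g₂ - f₂ ω)‖ ≤ ‖g₁ - f₁ ω‖ + ‖g₂ - f₂ ω‖ := norm_add_le _ _
        _ < ε / 2 + ε / 2 := add_lt_add hf₁ hf₂
        _ = ε := by ring
      · -- scalar multiplication
        intro c g hg ε hε
        obtain ⟨f, hfJ, hf⟩ := hg (ε / (‖c‖ + 1)) (by positivity)
        refine ⟨c • f, hJsmul c f hfJ, ?_⟩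
        rw [ContinuousMap.smul_apply, ← smul_sub, norm_smul]
        calc ‖c‖ * ‖g - f ω‖ ≤ ‖c‖ * (ε / (‖c‖ + 1)) :=
              mul_le_mul_of_nonneg_left hf.le (norm_nonneg c)
        _ < ε := by
            rw [mul_div_assoc', div_lt_iff₀ (by positivity)]
            nlinarith [norm_nonneg c]
      · -- solidity
        intro g hg h hhg ε hε
        obtain ⟨f, hfJ, hf⟩ := hg ε hε
        set H : C(Δ, L1) :=
          ⟨fun t => (h ⊓ (f t ⊔ -(f t))) ⊔ -(f t ⊔ -(f t)), by
            have hfc : Continuous fun t : Δ => f t := f.continuous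
            exact (continuous_const.inf (hfc.sup hfc.neg)).sup (hfc.sup hfc.neg).neg⟩
          with hHdef
        have hHt : ∀ t : Δ, H t = (h ⊓ |f t|) ⊔ -|f t| := fun t => rfl
        have hHJ : H ∈ J := by
          refine hJsolid f hfJ H ?_
          rw [ContinuousMap.le_def]
          intro t
          rw [ContinuousMap.abs_apply, ContinuousMap.abs_apply, hHt t]
          have hu : (0 : L1) ≤ |f t| := abs_nonneg _
          rw [abs_le']
          constructor
          · exact sup_le (inf_le_right) (neg_nonpos.mpr hu |>.trans hu)
          · rw [neg_le]
            exact le_sup_right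
        refine ⟨H, hHJ, ?_⟩
        have h1 : |h - H ω| ≤ |(|g| - |f ω|)| := by
          rw [hHt ω]; exact trunc_est hhg
        have h2 : |(|g| - |f ω|)| ≤ |g - f ω| := abs_abs_sub_abs_le g (f ω)
        have h3 : ‖h - H ω‖ ≤ ‖g - f ω‖ :=
          norm_le_norm_of_abs_le_abs (h1.trans h2)
        exact h3.trans_lt hf
  · -- the structural equality
    ext f
    constructor
    · intro hfJ ω ε hε
      exact ⟨f, hfJ, by simpa using hε⟩
    · intro hf
      rw [← hJclosed.closure_eq, Metric.mem_closure_iff]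
      intro ε hε
      have key : ∀ ω : Δ, ∃ gω, gω ∈ J ∧ ∃ C : Set Δ, IsClopen C ∧ ω ∈ C ∧
          ∀ t ∈ C, ‖f t - gω t‖ < ε / 2 := by
        intro ω
        obtain ⟨gω, hgJ, hg⟩ := hf ω (ε / 2) (by positivity)
        have hopen : IsOpen {t : Δ | ‖f t - gω t‖ < ε / 2} :=
          isOpen_lt ((f.continuous.sub gω.continuous).norm) continuous_const
        have hωmem : ω ∈ {t : Δ | ‖f t - gω t‖ < ε / 2} := hg
        obtain ⟨C, hC, hωC, hCsub⟩ := compact_exists_isClopen_in_isOpen hopen hωmem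
        exact ⟨gω, hgJ, C, hC, hωC, fun t ht => hCsub ht⟩
      choose g hgJ C hCclopen hωC hCless using key
      obtain ⟨s, hs⟩ := IsCompact.elim_finite_subcover isCompact_univ C
        (fun ω => (hCclopen ω).isOpen)
        (fun t _ => Set.mem_iUnion.mpr ⟨t, hωC t⟩)
      set l := s.toList with hl
      refine ⟨patch C hCclopen g l, patch_mem ⟨hJ0, hJadd, hJsmul, hJsolid⟩ C hCclopen g l
        (fun ω _ => hgJ ω), ?_⟩
      rw [dist_eq_norm]
      have hcov : ∀ t : Δ, ∃ ω ∈ l, t ∈ C ω := by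
        intro t
        have := hs (Set.mem_univ t)
        rw [Set.mem_iUnion₂] at this
        obtain ⟨ω, hωs, htω⟩ := this
        exact ⟨ω, by rwa [hl, Finset.mem_toList], htω⟩
      have hspec := patch_spec C hCclopen g f (ε / 2) l
        (fun ω _ t ht => hCless ω t ht) 
      have hle : ‖f - patch C hCclopen g l‖ ≤ ε / 2 := by
        rw [ContinuousMap.norm_le _ (by positivity)]
        intro t
        rw [ContinuousMap.sub_apply]
        exact (hspec t (hcov t)).le
      calc ‖f - patch C hCclopen g l‖ ≤ ε / 2 := hle
      _ < ε := by linarith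

end IdealsCDL1
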